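/- Let E be a closed preordered space and x ∈ E. If x has a compact neighborhood and E is locally convex at x, then the c-compact neighborhoods of x form a base of the neighborhood filter at x, and the open convex neighborhoods of x form a base of the neighborhood filter at x (i.e., E is weakly convex at x). -/
import Mathlib


open Topology

/-- The increasing hull `i(S) = {y | ∃ x ∈ S, x ≤ y}`. -/
def incHull {E : Type*} [Preorder E] (S : Set E) : Set E := {y | ∃ x ∈ S, x ≤ y}

/-- The decreasing hull `d(S) = {y | ∃ x ∈ S, y ≤ x}`. -/
def decHull {E : Type*} [Preorder E] (S : Set E) : Set E := {y | ∃ x ∈ S, y ≤ x}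

/-- A subset `C` is (order) convex if `C = d(C) ∩ i(C)`. -/
def IsOrdConvex {E : Type*} [Preorder E] (C : Set E) : Prop :=
  decHull C ∩ incHull C = C

/-- A `c`-set: an intersection of a closed decreasing set and a closed
increasing set. -/
def IsCSet {E : Type*} [TopologicalSpace E] [Preorder E] (C : Set E) : Prop :=
  ∃ A B : Set E, IsClosed A ∧ decHull A = A ∧ IsClosed B ∧ incHull B = B ∧ C = A ∩ B

section Aux

open Filter Set

set_option linter.unusedSectionVars false

variable {E : Type*} [TopologicalSpace E] [Preorder E]

lemma subset_incHull' (S : Set E) : S ⊆ incHull S := fun y hy => ⟨y, hy, le_refl y⟩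
lemma subset_decHull' (S : Set E) : S ⊆ decHull S := fun y hy => ⟨y, hy, le_refl y⟩

lemma incHull_mono' {S T : Set E} (h : S ⊆ T) : incHull S ⊆ incHull T :=
  fun _ ⟨a, ha, hle⟩ => ⟨a, h ha, hle⟩
lemma decHull_mono' {S T : Set E} (h : S ⊆ T) : decHull S ⊆ decHull T :=
  fun _ ⟨a, ha, hle⟩ => ⟨a, h ha, hle⟩

lemma incHull_incHull' (S : Set E) : incHull (incHull S) = incHull S := by
  apply Subset.antisymm
  · rintro y ⟨a, ⟨b, hb, hba⟩, hay⟩; exact ⟨b, hb, hba.trans hay⟩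
  · exact subset_incHull' _

lemma decHull_decHull' (S : Set E) : decHull (decHull S) = decHull S := by
  apply Subset.antisymm
  · rintro y ⟨a, ⟨b, hb, hba⟩, hay⟩; exact ⟨b, hb, hay.trans hba⟩
  · exact subset_decHull' _

lemma hull_subset_of_convex' {S C : Set E} (hSC : S ⊆ C) (hC : IsOrdConvex C) :
    decHull S ∩ incHull S ⊆ C := by
  rw [← hC]; exact inter_subset_inter (decHull_mono' hSC) (incHull_mono' hSC)

lemma isOrdConvex_hull' (F : Set E) : IsOrdConvex (decHull F ∩ incHull F) := by
  apply Subset.antisymm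
  · intro y hy
    constructor
    · have := decHull_mono' (inter_subset_left (s := decHull F) (t := incHull F))
      have h2 := this hy.1
      rwa [decHull_decHull'] at h2
    · have := incHull_mono' (inter_subset_right (s := decHull F) (t := incHull F))
      have h2 := this hy.2
      rwa [incHull_incHull'] at h2
  · exact subset_inter (subset_decHull' _) (subset_incHull' _)

lemma isClosed_incHull' (hG : IsClosed {p : E × E | p.1 ≤ p.2}) {F : Set E}
    (hF : IsCompact F) : IsClosed (incHull F) := by
  rw [isClosed_iff_clusterPt]
  intro y hy
  classical
  set c : E → E := fun z => if h : z ∈ incHull F then h.choose else z with hc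
  have hcF : ∀ z ∈ incHull F, c z ∈ F ∧ c z ≤ z := by
    intro z hz
    simp only [hc, dif_pos hz]
    exact ⟨hz.choose_spec.1, hz.choose_spec.2⟩
  set l : Filter E := 𝓝 y ⊓ 𝓟 (incHull F) with hl
  haveI : l.NeBot := hy
  have hmem : incHull F ∈ l := mem_inf_of_right (mem_principal_self _)
  have hmap : Filter.map c l ≤ 𝓟 F := by
    rw [Filter.le_principal_iff, Filter.mem_map]
    exact mem_of_superset hmem (fun z hz => (hcF z hz).1)
  obtain ⟨a, haF, hcl⟩ := hF hmap
  refine ⟨a, haF, ?_⟩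
  have : (a, y) ∈ {p : E × E | p.1 ≤ p.2} := by
    rw [← hG.closure_eq]
    rw [mem_closure_iff_nhds]
    intro t ht
    rw [nhds_prod_eq, Filter.mem_prod_iff] at ht
    obtain ⟨U, hU, W, hW, hUW⟩ := ht
    have himg : c '' (W ∩ incHull F) ∈ Filter.map c l := by
      rw [Filter.mem_map]
      exact mem_of_superset (inter_mem (mem_inf_of_left hW) hmem) (subset_preimage_image c _)
    have hne : (U ∩ c '' (W ∩ incHull F)).Nonempty := by
      haveI : (𝓝 a ⊓ Filter.map c l).NeBot := hcl
      exact Filter.nonempty_of_mem (inter_mem (mem_inf_of_left hU) (mem_inf_of_right himg))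
    obtain ⟨e, heU, z, ⟨hzW, hzF⟩, rfl⟩ := hne
    exact ⟨(c z, z), hUW ⟨heU, hzW⟩, (hcF z hzF).2⟩
  exact this

lemma isClosed_decHull' (hG : IsClosed {p : E × E | p.1 ≤ p.2}) {F : Set E}
    (hF : IsCompact F) : IsClosed (decHull F) := by
  rw [isClosed_iff_clusterPt]
  intro y hy
  classical
  set c : E → E := fun z => if h : z ∈ decHull F then h.choose else z with hc
  have hcF : ∀ z ∈ decHull F, c z ∈ F ∧ z ≤ c z := by
    intro z hz
    simp only [hc, dif_pos hz]
    exact ⟨hz.choose_spec.1, hz.choose_spec.2⟩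
  set l : Filter E := 𝓝 y ⊓ 𝓟 (decHull F) with hl
  haveI : l.NeBot := hy
  have hmem : decHull F ∈ l := mem_inf_of_right (mem_principal_self _)
  have hmap : Filter.map c l ≤ 𝓟 F := by
    rw [Filter.le_principal_iff, Filter.mem_map]
    exact mem_of_superset hmem (fun z hz => (hcF z hz).1)
  obtain ⟨a, haF, hcl⟩ := hF hmap
  refine ⟨a, haF, ?_⟩
  have : (y, a) ∈ {p : E × E | p.1 ≤ p.2} := by
    rw [← hG.closure_eq]
    rw [mem_closure_iff_nhds]
    intro t ht
    rw [nhds_prod_eq, Filter.mem_prod_iff] at ht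
    obtain ⟨W, hW, U, hU, hUW⟩ := ht
    have himg : c '' (W ∩ decHull F) ∈ Filter.map c l := by
      rw [Filter.mem_map]
      exact mem_of_superset (inter_mem (mem_inf_of_left hW) hmem) (subset_preimage_image c _)
    have hne : (U ∩ c '' (W ∩ decHull F)).Nonempty := by
      haveI : (𝓝 a ⊓ Filter.map c l).NeBot := hcl
      exact Filter.nonempty_of_mem (inter_mem (mem_inf_of_left hU) (mem_inf_of_right himg))
    obtain ⟨e, heU, z, ⟨hzW, hzF⟩, rfl⟩ := hne
    exact ⟨(z, c z), hUW ⟨hzW, heU⟩, (hcF z hzF).2⟩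
  exact this

lemma sep_of_not_le' (hG : IsClosed {p : E × E | p.1 ≤ p.2}) {a b : E} (h : ¬ a ≤ b) :
    ∃ U V : Set E, IsOpen U ∧ IsOpen V ∧ a ∈ U ∧ b ∈ V ∧
      ∀ u ∈ U, ∀ v ∈ V, ¬ u ≤ v := by
  have hopen : IsOpen {p : E × E | p.1 ≤ p.2}ᶜ := hG.isOpen_compl
  rw [isOpen_prod_iff] at hopen
  obtain ⟨U, V, hU, hV, haU, hbV, hsub⟩ := hopen a b h
  exact ⟨U, V, hU, hV, haU, hbV, fun u hu v hv hle => hsub (mk_mem_prod hu hv) hle⟩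

lemma le_of_inseparable' (hG : IsClosed {p : E × E | p.1 ≤ p.2}) {a b : E}
    (h : ∀ U V : Set E, IsOpen U → IsOpen V → a ∈ U → b ∈ V → (U ∩ V).Nonempty) :
    a ≤ b := by
  by_contra hab
  obtain ⟨U, V, hU, hV, haU, hbV, hsep⟩ := sep_of_not_le' hG hab
  obtain ⟨z, hzU, hzV⟩ := h U V hU hV haU hbV
  exact hsep z hzU z hzV le_rfl

lemma stepA' (hG : IsClosed {p : E × E | p.1 ≤ p.2}) {K M O' : Set E}
    (hK : IsCompact K) (hM : IsCompact M) (hMc : IsOrdConvex M)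
    (hO : IsOpen O') (hMO : M ⊆ O') :
    ∃ V : Set E, IsOpen V ∧ M ⊆ V ∧ closure V ∩ K ⊆ O' := by
  by_contra hcon
  push_neg at hcon
  have hne : ∀ V : Set E, IsOpen V → M ⊆ V → ((closure V ∩ O'ᶜ) ∩ K).Nonempty := by
    intro V hV hMV
    obtain ⟨z, hz, hzO⟩ := (not_subset).1 (hcon V hV hMV)
    exact ⟨z, ⟨⟨hz.1, hzO⟩, hz.2⟩⟩
  set ι := {V : Set E // IsOpen V ∧ M ⊆ V}
  set t : ι → Set E := fun V => closure V.1 ∩ O'ᶜ with ht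
  have htc : ∀ i : ι, IsClosed (t i) := fun i => isClosed_closure.inter hO.isClosed_compl
  have hfin : ∀ u : Finset ι, (K ∩ ⋂ i ∈ u, t i).Nonempty := by
    intro u
    have hVo : IsOpen (⋂ i ∈ u, i.1) := isOpen_biInter_finset (fun i _ => i.2.1)
    have hVM : M ⊆ ⋂ i ∈ u, i.1 := subset_iInter₂ (fun i _ => i.2.2)
    obtain ⟨z, ⟨⟨hz1, hz2⟩, hzK⟩⟩ := hne _ hVo hVM
    refine ⟨z, hzK, mem_iInter₂.2 fun i hi => ⟨?_, hz2⟩⟩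
    exact closure_mono (iInter₂_subset i hi) hz1
  obtain ⟨a, haK, hat⟩ := hK.inter_iInter_nonempty t htc hfin
  rw [mem_iInter] at hat
  have haO : a ∉ O' := (hat ⟨univ, isOpen_univ, subset_univ M⟩).2
  have hacl : ∀ V : Set E, IsOpen V → M ⊆ V → a ∈ closure V :=
    fun V hV hMV => (hat ⟨V, hV, hMV⟩).1
  have hm : ∃ m ∈ M, ∀ U V : Set E, IsOpen U → IsOpen V → m ∈ U → a ∈ V →
      (U ∩ V).Nonempty := by
    by_contra hno
    push_neg at hno
    classical
    have hno' : ∀ m ∈ M, ∃ U V : Set E, IsOpen U ∧ IsOpen V ∧ m ∈ U ∧ a ∈ V ∧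
        ¬ (U ∩ V).Nonempty := by
      intro m hmM
      obtain ⟨U, V, hU, hV, hmU, haV, hUV⟩ := hno m hmM
      exact ⟨U, V, hU, hV, hmU, haV, Set.not_nonempty_iff_eq_empty.2 hUV⟩
    choose! P Q hP hQ hmP haQ hPQ using hno'
    obtain ⟨s, hs⟩ := hM.elim_finite_subcover (fun m : ↥M => P m.1)
      (fun m => hP m.1 m.2) (fun z hz => mem_iUnion.2 ⟨⟨z, hz⟩, hmP z hz⟩)
    set V : Set E := ⋃ i ∈ s, P (i : ↥M).1 with hV
    have hVo : IsOpen V := isOpen_biUnion (fun i _ => hP i.1 i.2)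
    have haV : a ∈ closure V := hacl V hVo hs
    set Q' : Set E := ⋂ i ∈ s, Q (i : ↥M).1 with hQ'
    have hQ'o : IsOpen Q' := isOpen_biInter_finset (fun i _ => hQ i.1 i.2)
    have haQ' : a ∈ Q' := mem_iInter₂.2 (fun i _ => haQ i.1 i.2)
    obtain ⟨z, hzQ', hzV⟩ := (mem_closure_iff.1 haV) Q' hQ'o haQ'
    obtain ⟨i, hi, hzP⟩ := mem_iUnion₂.1 hzV
    exact hPQ i.1 i.2 ⟨z, hzP, mem_iInter₂.1 hzQ' i hi⟩
  obtain ⟨m, hmM, hins⟩ := hm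
  have h1 : a ≤ m := le_of_inseparable' hG (fun U V hU hV haU hmV =>
    (hins V U hV hU hmV haU).imp (fun z hz => ⟨hz.2, hz.1⟩))
  have h2 : m ≤ a := le_of_inseparable' hG hins
  have : a ∈ decHull M ∩ incHull M := ⟨⟨m, hmM, h1⟩, ⟨m, hmM, h2⟩⟩
  rw [hMc] at this
  exact haO (hMO this)

lemma point_sep_dec' (hG : IsClosed {p : E × E | p.1 ≤ p.2}) {t : E} {M : Set E}
    (hM : IsCompact M) (ht : t ∉ decHull M) :
    ∃ U V : Set E, IsOpen U ∧ IsOpen V ∧ t ∈ U ∧ M ⊆ V ∧ ∀ u ∈ U, u ∉ decHull V := by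
  classical
  have h : ∀ m ∈ M, ¬ t ≤ m := fun m hm hle => ht ⟨m, hm, hle⟩
  have h' : ∀ m ∈ M, ∃ U W : Set E, IsOpen U ∧ IsOpen W ∧ t ∈ U ∧ m ∈ W ∧
      ∀ u ∈ U, ∀ w ∈ W, ¬ u ≤ w := fun m hm => sep_of_not_le' hG (h m hm)
  choose! U W hU hW htU hmW hsep using h'
  obtain ⟨s, hs⟩ := hM.elim_finite_subcover (fun m : ↥M => W m.1)
    (fun m => hW m.1 m.2) (fun z hz => Set.mem_iUnion.2 ⟨⟨z, hz⟩, hmW z hz⟩)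
  refine ⟨⋂ i ∈ s, U (i : ↥M).1, ⋃ i ∈ s, W (i : ↥M).1,
    isOpen_biInter_finset (fun i _ => hU i.1 i.2),
    isOpen_biUnion (fun i _ => hW i.1 i.2),
    mem_iInter₂.2 (fun i _ => htU i.1 i.2), hs, ?_⟩
  rintro u hu ⟨v, hv, huv⟩
  obtain ⟨i, hi, hvW⟩ := mem_iUnion₂.1 hv
  exact hsep i.1 i.2 u (mem_iInter₂.1 hu i hi) v hvW huv

lemma point_sep_inc' (hG : IsClosed {p : E × E | p.1 ≤ p.2}) {t : E} {M : Set E}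
    (hM : IsCompact M) (ht : t ∉ incHull M) :
    ∃ U V : Set E, IsOpen U ∧ IsOpen V ∧ t ∈ U ∧ M ⊆ V ∧ ∀ u ∈ U, u ∉ incHull V := by
  classical
  have h : ∀ m ∈ M, ¬ m ≤ t := fun m hm hle => ht ⟨m, hm, hle⟩
  have h' : ∀ m ∈ M, ∃ W U : Set E, IsOpen W ∧ IsOpen U ∧ m ∈ W ∧ t ∈ U ∧
      ∀ w ∈ W, ∀ u ∈ U, ¬ w ≤ u := fun m hm => sep_of_not_le' hG (h m hm)
  choose! W U hW hU hmW htU hsep using h'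
  obtain ⟨s, hs⟩ := hM.elim_finite_subcover (fun m : ↥M => W m.1)
    (fun m => hW m.1 m.2) (fun z hz => Set.mem_iUnion.2 ⟨⟨z, hz⟩, hmW z hz⟩)
  refine ⟨⋂ i ∈ s, U (i : ↥M).1, ⋃ i ∈ s, W (i : ↥M).1,
    isOpen_biInter_finset (fun i _ => hU i.1 i.2),
    isOpen_biUnion (fun i _ => hW i.1 i.2),
    mem_iInter₂.2 (fun i _ => htU i.1 i.2), hs, ?_⟩
  rintro u hu ⟨v, hv, hvu⟩
  obtain ⟨i, hi, hvW⟩ := mem_iUnion₂.1 hv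
  exact hsep i.1 i.2 v hvW u (mem_iInter₂.1 hu i hi) hvu

lemma rect_sep' (hG : IsClosed {p : E × E | p.1 ≤ p.2}) {T M : Set E}
    (hT : IsCompact T) (hM : IsCompact M)
    (h : ∀ t ∈ T, t ∉ decHull M ∩ incHull M) :
    ∃ V : Set E, IsOpen V ∧ M ⊆ V ∧ (decHull V ∩ incHull V) ∩ T = ∅ := by
  classical
  have h' : ∀ t ∈ T, ∃ U V : Set E, IsOpen U ∧ IsOpen V ∧ t ∈ U ∧ M ⊆ V ∧
      ∀ u ∈ U, u ∉ decHull V ∩ incHull V := by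
    intro t ht
    by_cases hd : t ∈ decHull M
    · have hi : t ∉ incHull M := fun hi => h t ht ⟨hd, hi⟩
      obtain ⟨U, V, hU, hV, htU, hMV, hsep⟩ := point_sep_inc' hG hM hi
      exact ⟨U, V, hU, hV, htU, hMV, fun u hu hc => hsep u hu hc.2⟩
    · obtain ⟨U, V, hU, hV, htU, hMV, hsep⟩ := point_sep_dec' hG hM hd
      exact ⟨U, V, hU, hV, htU, hMV, fun u hu hc => hsep u hu hc.1⟩
  choose! U V hU hV htU hMV hsep using h'
  obtain ⟨s, hs⟩ := hT.elim_finite_subcover (fun t : ↥T => U t.1)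
    (fun t => hU t.1 t.2) (fun z hz => Set.mem_iUnion.2 ⟨⟨z, hz⟩, htU z hz⟩)
  refine ⟨⋂ i ∈ s, V (i : ↥T).1, isOpen_biInter_finset (fun i _ => hV i.1 i.2),
    subset_iInter₂ (fun i _ => hMV i.1 i.2), ?_⟩
  rw [Set.eq_empty_iff_forall_notMem]
  rintro y ⟨⟨hyd, hyi⟩, hyT⟩
  obtain ⟨i, hi, hyU⟩ := mem_iUnion₂.1 (hs hyT)
  refine hsep i.1 i.2 y hyU ⟨?_, ?_⟩
  · exact (fun ⟨v, hv, hle⟩ => ⟨v, mem_iInter₂.1 hv i hi, hle⟩ : y ∈ decHull _ → _) hyd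
  · exact (fun ⟨v, hv, hle⟩ => ⟨v, mem_iInter₂.1 hv i hi, hle⟩ : y ∈ incHull _ → _) hyi

/-- Main construction: a c-compact convex neighborhood inside any open
`O₀ ∋ x` contained in the compact neighborhood `K`. -/
lemma key_lemma (hG : IsClosed {p : E × E | p.1 ≤ p.2}) {x : E} {K : Set E}
    (hK : IsCompact K) (hKx : K ∈ 𝓝 x)
    (hlc : ∀ O ∈ 𝓝 x, ∃ C ∈ 𝓝 x, IsOrdConvex C ∧ C ⊆ O)
    {O₀ : Set E} (hO₀ : IsOpen O₀) (hx : x ∈ O₀) (hO₀K : O₀ ⊆ K) :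
    ∃ N : Set E, N ∈ 𝓝 x ∧ IsCompact N ∧ IsOrdConvex N ∧ IsCSet N ∧ N ⊆ O₀ := by
  obtain ⟨C, hCx, hCc, hCO⟩ := hlc O₀ (hO₀.mem_nhds hx)
  -- the compact convex set `M = d(x) ∩ i(x)`
  set M : Set E := decHull {x} ∩ incHull {x} with hMdef
  have hxM : x ∈ M := ⟨⟨x, rfl, le_rfl⟩, ⟨x, rfl, le_rfl⟩⟩
  have hMnhds : ∀ S ∈ 𝓝 x, M ⊆ S := by
    intro S hS
    obtain ⟨C', hC'x, hC'c, hC'S⟩ := hlc S hS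
    have hxC' : ({x} : Set E) ⊆ C' := Set.singleton_subset_iff.2 (mem_of_mem_nhds hC'x)
    exact (hull_subset_of_convex' hxC' hC'c).trans hC'S
  have hMclosed : IsClosed M :=
    (isClosed_decHull' hG isCompact_singleton).inter (isClosed_incHull' hG isCompact_singleton)
  have hMK : M ⊆ K := hMnhds K hKx
  have hMcpt : IsCompact M := by
    have := hK.inter_right hMclosed
    rwa [Set.inter_eq_self_of_subset_right hMK] at this
  have hMconv : IsOrdConvex M := isOrdConvex_hull' _
  have hMintC : M ⊆ interior C := hMnhds _ (interior_mem_nhds.2 hCx)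
  obtain ⟨V, hVo, hMV, hVK⟩ := stepA' hG hK hMcpt hMconv isOpen_interior hMintC
  set F : Set E := closure V ∩ K with hFdef
  have hFcpt : IsCompact F := hK.inter_left isClosed_closure
  have hFC : F ⊆ C := hVK.trans interior_subset
  set N : Set E := decHull F ∩ incHull F with hNdef
  have hNC : N ⊆ C := hull_subset_of_convex' hFC hCc
  have hNO : N ⊆ O₀ := hNC.trans hCO
  have hNclosed : IsClosed N := (isClosed_decHull' hG hFcpt).inter (isClosed_incHull' hG hFcpt)
  have hNK : N ⊆ K := hNO.trans hO₀K
  have hNcpt : IsCompact N := by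
    have := hK.inter_right hNclosed
    rwa [Set.inter_eq_self_of_subset_right hNK] at this
  have hFN : F ⊆ N := Set.subset_inter (subset_decHull' F) (subset_incHull' F)
  have hNnhds : N ∈ 𝓝 x := by
    have hVKx : V ∩ K ∈ 𝓝 x := Filter.inter_mem (hVo.mem_nhds (hMV hxM)) hKx
    exact Filter.mem_of_superset hVKx
      ((Set.inter_subset_inter_left K subset_closure).trans hFN)
  exact ⟨N, hNnhds, hNcpt, isOrdConvex_hull' F,
    ⟨decHull F, incHull F, isClosed_decHull' hG hFcpt, decHull_decHull' F,
      isClosed_incHull' hG hFcpt, incHull_incHull' F, rfl⟩, hNO⟩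

end Aux

/-- In a closed preordered space, if `x` has a compact neighborhood and the
space is locally convex at `x`, then the c-compact neighborhoods of `x` form a
base of the neighborhood filter at `x`, and so do the open convex
neighborhoods of `x` (weak convexity at `x`). -/
theorem cCompact_and_openConvex_nbhd_basis {E : Type*} [TopologicalSpace E] [Preorder E]
    (hG : IsClosed {p : E × E | p.1 ≤ p.2}) (x : E)
    (hk : ∃ K : Set E, IsCompact K ∧ K ∈ 𝓝 x)
    (hlc : ∀ O ∈ 𝓝 x, ∃ C ∈ 𝓝 x, IsOrdConvex C ∧ C ⊆ O) :
    (∀ O ∈ 𝓝 x, ∃ N ∈ 𝓝 x, IsCompact N ∧ IsCSet N ∧ N ⊆ O) ∧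
    (∀ O ∈ 𝓝 x, ∃ N ∈ 𝓝 x, IsOpen N ∧ IsOrdConvex N ∧ N ⊆ O) := by
  classical
  obtain ⟨K, hK, hKx⟩ := hk
  constructor
  · -- c-compact neighborhoods
    intro O hO
    have hO₀ : IsOpen (interior O ∩ interior K) := isOpen_interior.inter isOpen_interior
    have hx : x ∈ interior O ∩ interior K :=
      ⟨mem_interior_iff_mem_nhds.2 hO, mem_interior_iff_mem_nhds.2 hKx⟩
    have hO₀K : interior O ∩ interior K ⊆ K :=
      Set.inter_subset_right.trans interior_subset
    obtain ⟨N, hN, hNcpt, _, hNcset, hNsub⟩ := key_lemma hG hK hKx hlc hO₀ hx hO₀K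
    exact ⟨N, hN, hNcpt, hNcset,
      hNsub.trans (Set.inter_subset_left.trans interior_subset)⟩
  · -- open convex neighborhoods
    intro O hO
    have hO₀ : IsOpen (interior O ∩ interior K) := isOpen_interior.inter isOpen_interior
    have hx : x ∈ interior O ∩ interior K :=
      ⟨mem_interior_iff_mem_nhds.2 hO, mem_interior_iff_mem_nhds.2 hKx⟩
    have hO₀K : interior O ∩ interior K ⊆ K :=
      Set.inter_subset_right.trans interior_subset
    obtain ⟨N1, hN1x, hN1cpt, hN1conv, _, hN1sub⟩ := key_lemma hG hK hKx hlc hO₀ hx hO₀K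
    have hN1K : N1 ⊆ K := hN1sub.trans hO₀K
    have hN1O : N1 ⊆ O := hN1sub.trans (Set.inter_subset_left.trans interior_subset)
    -- `T` is the "boundary" of `N1`
    set T : Set E := N1 \ interior N1 with hTdef
    have hTcpt : IsCompact T := hN1cpt.inter_right isOpen_interior.isClosed_compl
    -- the inductive step
    have STEP : ∀ M : Set E, IsCompact M → IsOrdConvex M → M ⊆ interior N1 →
        ∃ M' V : Set E, IsOpen V ∧ M ⊆ V ∧ V ⊆ interior N1 ∧
          decHull V ∩ incHull V ⊆ M' ∧ IsCompact M' ∧ IsOrdConvex M' ∧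
          M' ⊆ interior N1 := by
      intro M hMcpt hMconv hMN
      have hTM : ∀ t ∈ T, t ∉ decHull M ∩ incHull M := by
        intro t ht hc
        rw [hMconv] at hc
        exact ht.2 (hMN hc)
      obtain ⟨V1, hV1o, hMV1, hV1T⟩ := rect_sep' hG hTcpt hMcpt hTM
      set V2 : Set E := V1 ∩ interior N1 with hV2def
      have hV2o : IsOpen V2 := hV1o.inter isOpen_interior
      have hMV2 : M ⊆ V2 := Set.subset_inter hMV1 hMN
      obtain ⟨V3, hV3o, hMV3, hV3K⟩ := stepA' hG hK hMcpt hMconv hV2o hMV2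
      set V : Set E := V3 ∩ V2 with hVdef
      have hVo : IsOpen V := hV3o.inter hV2o
      have hMV : M ⊆ V := Set.subset_inter hMV3 hMV2
      have hVint : V ⊆ interior N1 := Set.inter_subset_right.trans Set.inter_subset_right
      set F : Set E := closure V ∩ K with hFdef
      have hFcpt : IsCompact F := hK.inter_left isClosed_closure
      have hFV2 : F ⊆ V2 := fun z hz =>
        hV3K ⟨closure_mono Set.inter_subset_left hz.1, hz.2⟩
      set M' : Set E := decHull F ∩ incHull F with hM'def
      have hM'V1 : M' ⊆ decHull V1 ∩ incHull V1 :=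
        Set.inter_subset_inter (decHull_mono' (hFV2.trans Set.inter_subset_left))
          (incHull_mono' (hFV2.trans Set.inter_subset_left))
      have hFN1 : F ⊆ N1 := (hFV2.trans Set.inter_subset_right).trans interior_subset
      have hM'N1 : M' ⊆ N1 := hull_subset_of_convex' hFN1 hN1conv
      have hM'int : M' ⊆ interior N1 := by
        intro y hy
        by_contra hni
        exact Set.eq_empty_iff_forall_notMem.1 hV1T y ⟨hM'V1 hy, hM'N1 hy, hni⟩
      have hVK : V ⊆ K := (hVint.trans interior_subset).trans hN1K
      have hVF : V ⊆ F := fun z hz => ⟨subset_closure hz, hVK hz⟩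
      have hhull : decHull V ∩ incHull V ⊆ M' :=
        Set.inter_subset_inter (decHull_mono' hVF) (incHull_mono' hVF)
      have hM'closed : IsClosed M' :=
        (isClosed_decHull' hG hFcpt).inter (isClosed_incHull' hG hFcpt)
      have hM'cpt : IsCompact M' := by
        have := hK.inter_right hM'closed
        rwa [Set.inter_eq_self_of_subset_right (hM'N1.trans hN1K)] at this
      exact ⟨M', V, hVo, hMV, hVint, hhull, hM'cpt, isOrdConvex_hull' F, hM'int⟩
    -- the starting set `M0 = d(x) ∩ i(x)`
    set M0 : Set E := decHull {x} ∩ incHull {x} with hM0def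
    have hxM0 : x ∈ M0 := ⟨⟨x, rfl, le_rfl⟩, ⟨x, rfl, le_rfl⟩⟩
    have hM0nhds : ∀ S ∈ 𝓝 x, M0 ⊆ S := by
      intro S hS
      obtain ⟨C', hC'x, hC'c, hC'S⟩ := hlc S hS
      have hxC' : ({x} : Set E) ⊆ C' := Set.singleton_subset_iff.2 (mem_of_mem_nhds hC'x)
      exact (hull_subset_of_convex' hxC' hC'c).trans hC'S
    have hM0closed : IsClosed M0 :=
      (isClosed_decHull' hG isCompact_singleton).inter (isClosed_incHull' hG isCompact_singleton)
    have hM0cpt : IsCompact M0 := by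
      have := hK.inter_right hM0closed
      rwa [Set.inter_eq_self_of_subset_right (hM0nhds K hKx)] at this
    have hM0int : M0 ⊆ interior N1 := hM0nhds _ (interior_mem_nhds.2 hN1x)
    -- iterate the step
    have STEP' : ∀ p : {M : Set E // IsCompact M ∧ IsOrdConvex M ∧ M ⊆ interior N1},
        ∃ q : {M : Set E // IsCompact M ∧ IsOrdConvex M ∧ M ⊆ interior N1},
          ∃ V : Set E, IsOpen V ∧ p.1 ⊆ V ∧ V ⊆ interior N1 ∧
            decHull V ∩ incHull V ⊆ q.1 := by
      rintro ⟨M, hMcpt, hMconv, hMN⟩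
      obtain ⟨M', V, hVo, hMV, hVint, hhull, hM'cpt, hM'conv, hM'int⟩ :=
        STEP M hMcpt hMconv hMN
      exact ⟨⟨M', hM'cpt, hM'conv, hM'int⟩, V, hVo, hMV, hVint, hhull⟩
    choose f Vf hVo hMV hVint hhull using STEP'
    set seq : ℕ → {M : Set E // IsCompact M ∧ IsOrdConvex M ∧ M ⊆ interior N1} :=
      fun n => f^[n] ⟨M0, hM0cpt, isOrdConvex_hull' _, hM0int⟩ with hseq
    have hseqsucc : ∀ n, seq (n + 1) = f (seq n) := by
      intro n
      simp only [hseq, Function.iterate_succ_apply']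
    set Vs : ℕ → Set E := fun n => Vf (seq n) with hVs
    have hVsub : ∀ n, Vs n ⊆ Vs (n + 1) := by
      intro n
      have h1 : Vs n ⊆ decHull (Vs n) ∩ incHull (Vs n) :=
        Set.subset_inter (subset_decHull' _) (subset_incHull' _)
      have h2 : decHull (Vs n) ∩ incHull (Vs n) ⊆ (f (seq n)).1 := hhull (seq n)
      have h3 : (f (seq n)).1 ⊆ Vf (f (seq n)) := hMV (f (seq n))
      refine (h1.trans h2).trans ?_
      rw [← hseqsucc n]
      exact hMV (seq (n + 1))
    have hVmono : Monotone Vs := monotone_nat_of_le_succ hVsub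
    set W : Set E := ⋃ n, Vs n with hW
    have hWo : IsOpen W := isOpen_iUnion (fun n => hVo (seq n))
    have hxW : x ∈ W := by
      refine Set.mem_iUnion.2 ⟨0, ?_⟩
      exact hMV (seq 0) hxM0
    have hWsub : W ⊆ O := by
      refine Set.iUnion_subset (fun n => ?_)
      exact (hVint (seq n)).trans (interior_subset.trans hN1O)
    have hWconv : IsOrdConvex W := by
      apply Set.Subset.antisymm
      · rintro y ⟨⟨w2, hw2, hy2⟩, ⟨w1, hw1, hy1⟩⟩
        obtain ⟨a, ha⟩ := Set.mem_iUnion.1 hw2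
        obtain ⟨b, hb⟩ := Set.mem_iUnion.1 hw1
        have hw2' : w2 ∈ Vs (max a b) := hVmono (le_max_left a b) ha
        have hw1' : w1 ∈ Vs (max a b) := hVmono (le_max_right a b) hb
        have hy : y ∈ decHull (Vs (max a b)) ∩ incHull (Vs (max a b)) :=
          ⟨⟨w2, hw2', hy2⟩, ⟨w1, hw1', hy1⟩⟩
        have := hhull (seq (max a b)) hy
        rw [← hseqsucc (max a b)] at this
        have := hMV (seq (max a b + 1)) this
        exact Set.mem_iUnion.2 ⟨max a b + 1, this⟩
      · exact fun y hy => ⟨⟨y, hy, le_rfl⟩, ⟨y, hy, le_rfl⟩⟩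
    exact ⟨W, hWo.mem_nhds hxW, hWo, hWconv, hWsub⟩
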